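/- If two graphs G₁ and G₂ have equal multisets of diagonal k-WL colors, then the vertex-color multisets produced by 1-WL refinement initialized with Δ(k-WL) remain equal after every number of iterations; that is, the 1-WL message passing iterations add no distinguishing information beyond the initial coloring Δ(k-WL). -/

import Mathlib

def WLType (α : Type) : ℕ → Type
  | 0 => α
  | n + 1 => WLType α n × Multiset (WLType α n)

open Classical in
/-- `n` rounds of 1-WL refinement: `C'(v) = (C(v), {{C(x) : x ∈ N(v)}})`. -/
noncomputable def wl {V : Type} [Fintype V] {α : Type} (G : SimpleGraph V) (C : V → α) :
    (n : ℕ) → V → WLType α n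
  | 0 => C
  | n + 1 => fun v =>
      (wl G C n v, Multiset.map (wl G C n) (Finset.univ.val.filter (fun x => G.Adj v x)))

/-- The multiset of 1-WL colors of all vertices after `n` rounds. -/
noncomputable def wlColors {V : Type} [Fintype V] {α : Type} (G : SimpleGraph V)
    (C : V → α) (n : ℕ) : Multiset (WLType α n) :=
  Finset.univ.val.map (wl G C n)

def kInit {V : Type} (G : SimpleGraph V) (k : ℕ) (t : Fin k → V) :
    (Fin k → Fin k → Prop) × (Fin k → Fin k → Prop) :=
  (fun i j => t i = t j, fun i j => G.Adj (t i) (t j))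

def KWLType (k : ℕ) : ℕ → Type
  | 0 => (Fin k → Fin k → Prop) × (Fin k → Fin k → Prop)
  | n + 1 => KWLType k n × (Fin k → Multiset (KWLType k n))

def kwl {V : Type} [Fintype V] (G : SimpleGraph V) (k : ℕ) :
    (n : ℕ) → (Fin k → V) → KWLType k n
  | 0 => kInit G k
  | n + 1 => fun t => (kwl G k n t,
      fun j => Finset.univ.val.map (fun w => kwl G k n (Function.update t j w)))

/-- A number of `k`-WL iterations after which the coloring of the disjoint union of
`G₁` and `G₂` is guaranteed to have stabilized. -/
def stableSteps (V₁ V₂ : Type) [Fintype V₁] [Fintype V₂] (k : ℕ) : ℕ :=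
  Fintype.card ((Fin k → V₁) ⊕ (Fin k → V₂))

/-- The stable diagonal `k`-WL coloring `Δ(k-WL)(v) = C_{k-WL}(v,…,v)`, computed for the
pair `(G₁, G₂)` (the stabilization number of iterations is that of the pair). -/
def kwlDiag {V₁ V₂ V : Type} [Fintype V₁] [Fintype V₂] [Fintype V]
    (G : SimpleGraph V) (k : ℕ) (v : V) : KWLType k (stableSteps V₁ V₂ k) :=
  kwl G k (stableSteps V₁ V₂ k) (fun _ => v)

section Aux

open Classical

namespace KWLAux

/-- Generic multiset lemmas. -/
theorem mrel_of_map_eq {α β γ : Type*} {f : α → γ} {g : β → γ} {s : Multiset α}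
    {t : Multiset β} (h : s.map f = t.map g) :
    Multiset.Rel (fun a b => f a = g b) s t := by
  rw [← Multiset.rel_eq] at h
  exact Multiset.rel_map.mp h

theorem map_eq_of_mrel {α β γ : Type*} {f : α → γ} {g : β → γ} {s : Multiset α}
    {t : Multiset β} (h : Multiset.Rel (fun a b => f a = g b) s t) :
    s.map f = t.map g :=
  Multiset.rel_eq.mp (Multiset.rel_map.mpr h)

theorem mrel_filter {α β : Type*} {r : α → β → Prop} {p : α → Prop} {q : β → Prop}
    [DecidablePred p] [DecidablePred q] (hpq : ∀ a b, r a b → (p a ↔ q b))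
    {s : Multiset α} {t : Multiset β} (h : Multiset.Rel r s t) :
    Multiset.Rel r (s.filter p) (t.filter q) := by
  induction h with
  | zero => simp
  | @cons a b s t hab hst ih =>
      by_cases hp : p a
      · rw [Multiset.filter_cons_of_pos _ hp,
          Multiset.filter_cons_of_pos _ ((hpq a b hab).mp hp)]
        exact Multiset.Rel.cons hab ih
      · rw [Multiset.filter_cons_of_neg _ hp,
          Multiset.filter_cons_of_neg _ (fun hq => hp ((hpq a b hab).mpr hq))]
        exact ih

theorem mrel_singleton {α β : Type*} {r : α → β → Prop} {a : α} {b : β}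
    (h : Multiset.Rel r {a} {b}) : r a b := by
  rcases Multiset.rel_cons_left.mp h with ⟨b', bs, hab', hrest, heq⟩
  rcases (Multiset.singleton_eq_cons_iff _).mp heq with ⟨rfl, rfl⟩
  exact hab'

variable {V₁ V₂ : Type} [Fintype V₁] [Fintype V₂]
  (G₁ : SimpleGraph V₁) (G₂ : SimpleGraph V₂) (k : ℕ)

/-- Tuples over the disjoint union of the two vertex sets. -/
abbrev STup (V₁ V₂ : Type) (k : ℕ) : Type := (Fin k → V₁) ⊕ (Fin k → V₂)

/-- The combined `k`-WL coloring of tuples of the two graphs. -/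
def cS (n : ℕ) : STup V₁ V₂ k → KWLType k n :=
  Sum.elim (kwl G₁ k n) (kwl G₂ k n)

/-- The tuples obtained from `x` by replacing coordinate `j` by an arbitrary vertex. -/
def nbhdS (k : ℕ) : STup V₁ V₂ k → Fin k → Multiset (STup V₁ V₂ k)
  | Sum.inl t, j => Finset.univ.val.map (fun w => Sum.inl (Function.update t j w))
  | Sum.inr t, j => Finset.univ.val.map (fun w => Sum.inr (Function.update t j w))

theorem cS_fst (n : ℕ) (x : STup V₁ V₂ k) :
    (cS G₁ G₂ k (n + 1) x).1 = cS G₁ G₂ k n x := by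
  cases x <;> rfl

theorem cS_snd (n : ℕ) (x : STup V₁ V₂ k) (j : Fin k) :
    (cS G₁ G₂ k (n + 1) x).2 j = (nbhdS k x j).map (cS G₁ G₂ k n) := by
  cases x <;> simp [cS, nbhdS, kwl, Multiset.map_map] <;> rfl

theorem cS_down {n m : ℕ} (h : n ≤ m) {x y : STup V₁ V₂ k}
    (hxy : cS G₁ G₂ k m x = cS G₁ G₂ k m y) : cS G₁ G₂ k n x = cS G₁ G₂ k n y := by
  induction m with
  | zero => obtain rfl := Nat.le_zero.mp h; exact hxy
  | succ m ih =>
      rcases Nat.lt_or_ge n (m + 1) with h' | h'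
      · refine ih (Nat.lt_succ_iff.mp h') ?_
        have := congrArg Prod.fst hxy
        rwa [cS_fst, cS_fst] at this
      · obtain rfl : n = m + 1 := le_antisymm h h'
        exact hxy

/-- The equality pattern of a tuple, as read off from its color. -/
def eqP (x : STup V₁ V₂ k) (i j : Fin k) : Prop := (cS G₁ G₂ k 0 x).1 i j

/-- The adjacency pattern of a tuple, as read off from its color. -/
def adjP (x : STup V₁ V₂ k) (i j : Fin k) : Prop := (cS G₁ G₂ k 0 x).2 i j

theorem eqP_inl (t : Fin k → V₁) (i j : Fin k) :
    eqP G₁ G₂ k (Sum.inl t) i j = (t i = t j) := rfl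

theorem eqP_inr (t : Fin k → V₂) (i j : Fin k) :
    eqP G₁ G₂ k (Sum.inr t) i j = (t i = t j) := rfl

/-- Stability predicate: the coloring at step `n` determines the coloring at `n + 1`. -/
def Good (n : ℕ) : Prop :=
  ∀ x y : STup V₁ V₂ k, cS G₁ G₂ k n x = cS G₁ G₂ k n y →
    cS G₁ G₂ k (n + 1) x = cS G₁ G₂ k (n + 1) y

theorem good_succ {n : ℕ} (h : Good G₁ G₂ k n) : Good G₁ G₂ k (n + 1) := by
  intro x y hxy
  have h1 : cS G₁ G₂ k n x = cS G₁ G₂ k n y := by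
    have := congrArg Prod.fst hxy; rwa [cS_fst, cS_fst] at this
  refine Prod.ext ?_ ?_
  · rw [cS_fst, cS_fst]; exact hxy
  · funext j
    rw [cS_snd, cS_snd]
    have h2 : (nbhdS k x j).map (cS G₁ G₂ k n) = (nbhdS k y j).map (cS G₁ G₂ k n) := by
      have := congrArg (fun z => z.2 j) hxy
      simpa [cS_snd] using this
    exact map_eq_of_mrel ((mrel_of_map_eq h2).mono (fun a _ b _ hab => h a b hab))

theorem good_mono {n m : ℕ} (h : n ≤ m) (hg : Good G₁ G₂ k n) : Good G₁ G₂ k m := by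
  induction m with
  | zero => obtain rfl := Nat.le_zero.mp h; exact hg
  | succ m ih =>
      rcases Nat.lt_or_ge n (m + 1) with h' | h'
      · exact good_succ G₁ G₂ k (ih (Nat.lt_succ_iff.mp h'))
      · obtain rfl : n = m + 1 := le_antisymm h h'
        exact hg

/-- Number of colors at step `n`. -/
noncomputable def Nc (n : ℕ) : ℕ := (Finset.univ.image (cS G₁ G₂ k n)).card

theorem Nc_lt {n : ℕ} (h : ¬ Good G₁ G₂ k n) : Nc G₁ G₂ k n < Nc G₁ G₂ k (n + 1) := by
  simp only [Good, not_forall] at h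
  obtain ⟨x, y, hxy, hne⟩ := h
  have himg : (Finset.univ.image (cS G₁ G₂ k n)) =
      (Finset.univ.image (cS G₁ G₂ k (n + 1))).image Prod.fst := by
    ext z
    simp only [Finset.mem_image, Finset.mem_univ, true_and, Finset.mem_image]
    constructor
    · rintro ⟨x, rfl⟩
      exact Finset.mem_image.mpr ⟨cS G₁ G₂ k (n + 1) x,
        Finset.mem_image_of_mem (β := KWLType k (n + 1)) (cS G₁ G₂ k (n + 1)) (Finset.mem_univ x),
        cS_fst G₁ G₂ k n x⟩
    · intro hz
      obtain ⟨z', hz', rfl⟩ := Finset.mem_image.mp hz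
      obtain ⟨x, -, rfl⟩ := (Finset.mem_image (β := KWLType k (n + 1)) (s := Finset.univ)
        (f := cS G₁ G₂ k (n + 1))).mp hz'
      exact ⟨x, (cS_fst G₁ G₂ k n x).symm⟩
  have hle : Nc G₁ G₂ k n ≤ Nc G₁ G₂ k (n + 1) := by
    rw [Nc, himg]; exact Finset.card_image_le
  rcases lt_or_eq_of_le hle with hlt | heq
  · exact hlt
  · exfalso
    have : Set.InjOn Prod.fst ((Finset.univ.image (cS G₁ G₂ k (n + 1)) : Finset (KWLType k (n + 1))) : Set (KWLType k (n + 1))) := by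
      apply Finset.injOn_of_card_image_eq
      rw [← himg]; exact heq
    have hx : cS G₁ G₂ k (n + 1) x ∈ (Finset.univ.image (cS G₁ G₂ k (n + 1))) :=
      Finset.mem_image_of_mem _ (Finset.mem_univ x)
    have hy : cS G₁ G₂ k (n + 1) y ∈ (Finset.univ.image (cS G₁ G₂ k (n + 1))) :=
      Finset.mem_image_of_mem _ (Finset.mem_univ y)
    exact hne (this (Finset.mem_coe.mpr hx) (Finset.mem_coe.mpr hy) (by rw [cS_fst, cS_fst]; exact hxy))

theorem good_card : Good G₁ G₂ k (Fintype.card (STup V₁ V₂ k)) := by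
  cases isEmpty_or_nonempty (STup V₁ V₂ k) with
  | inl he => exact fun x => (he.false x).elim
  | inr hne =>
      set N := Fintype.card (STup V₁ V₂ k) with hN
      have H : ¬ (∀ n, n < N → ¬ Good G₁ G₂ k n) := by
        intro hall
        have mono : ∀ n, n ≤ N → n + 1 ≤ Nc G₁ G₂ k n := by
          intro n
          induction n with
          | zero =>
              intro _
              rw [Nc]
              refine Finset.card_pos.mpr ?_
              haveI := hne
              exact (Finset.univ_nonempty).image _
          | succ n ih =>
              intro hn
              have h1 := ih (by omega)
              have h2 := Nc_lt G₁ G₂ k (hall n (by omega))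
              omega
        have h1 := mono N le_rfl
        have h2 : Nc G₁ G₂ k N ≤ N := by
          rw [Nc]
          exact Finset.card_image_le.trans (by rw [Finset.card_univ])
        omega
      push_neg at H
      obtain ⟨n, hn, hg⟩ := H
      exact good_mono G₁ G₂ k (le_of_lt hn) hg

/-- Replace coordinate `i` of a tuple by its own coordinate `j`. -/
def updSelf (k : ℕ) : STup V₁ V₂ k → Fin k → Fin k → STup V₁ V₂ k
  | Sum.inl t, i, j => Sum.inl (Function.update t i (t j))
  | Sum.inr t, i, j => Sum.inr (Function.update t i (t j))

/-- The diagonal tuple at the `j`-th coordinate of a tuple. -/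
def diagAt (k : ℕ) : STup V₁ V₂ k → Fin k → STup V₁ V₂ k
  | Sum.inl t, j => Sum.inl (fun _ => t j)
  | Sum.inr t, j => Sum.inr (fun _ => t j)

theorem nbhdS_filter_eqP {i j : Fin k} (hij : i ≠ j) (x : STup V₁ V₂ k) :
    (nbhdS k x i).filter (fun z => eqP G₁ G₂ k z i j) = {updSelf k x i j} := by
  cases x with
  | inl t =>
      show Multiset.filter _ (Finset.univ.val.map (fun w => Sum.inl (Function.update t i w))) = _
      rw [Multiset.filter_map]
      have h1 : Multiset.filter
          ((fun z => eqP G₁ G₂ k z i j) ∘ (fun w => Sum.inl (Function.update t i w)))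
          Finset.univ.val = Multiset.filter (fun w => w = t j) Finset.univ.val := by
        refine Multiset.filter_congr (fun w _ => ?_)
        show (Function.update t i w i = Function.update t i w j) ↔ (w = t j)
        rw [Function.update_self, Function.update_of_ne (Ne.symm hij)]
      have h2 : Multiset.filter (fun w => w = t j) Finset.univ.val = {t j} := by
        refine Multiset.ext.mpr (fun a => ?_)
        rw [Multiset.count_filter]
        by_cases ha : a = t j
        · subst ha
          simp [Multiset.count_eq_one_of_mem Finset.univ.nodup (Finset.mem_univ _)]
        · simp [ha, Multiset.count_singleton]
      rw [h1, h2, Multiset.map_singleton]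
      rfl
  | inr t =>
      show Multiset.filter _ (Finset.univ.val.map (fun w => Sum.inr (Function.update t i w))) = _
      rw [Multiset.filter_map]
      have h1 : Multiset.filter
          ((fun z => eqP G₁ G₂ k z i j) ∘ (fun w => Sum.inr (Function.update t i w)))
          Finset.univ.val = Multiset.filter (fun w => w = t j) Finset.univ.val := by
        refine Multiset.filter_congr (fun w _ => ?_)
        show (Function.update t i w i = Function.update t i w j) ↔ (w = t j)
        rw [Function.update_self, Function.update_of_ne (Ne.symm hij)]
      have h2 : Multiset.filter (fun w => w = t j) Finset.univ.val = {t j} := by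
        refine Multiset.ext.mpr (fun a => ?_)
        rw [Multiset.count_filter]
        by_cases ha : a = t j
        · subst ha
          simp [Multiset.count_eq_one_of_mem Finset.univ.nodup (Finset.mem_univ _)]
        · simp [ha, Multiset.count_singleton]
      rw [h1, h2, Multiset.map_singleton]
      rfl

/-- The color pattern at step `0` is propagated to equality of `eqP` under color equality. -/
theorem eqP_congr {N : ℕ} {x y : STup V₁ V₂ k}
    (h : cS G₁ G₂ k N x = cS G₁ G₂ k N y) (i j : Fin k) :
    eqP G₁ G₂ k x i j ↔ eqP G₁ G₂ k y i j := by
  have h0 : cS G₁ G₂ k 0 x = cS G₁ G₂ k 0 y := cS_down G₁ G₂ k (Nat.zero_le N) h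
  rw [eqP, eqP, h0]

theorem adjP_congr {N : ℕ} {x y : STup V₁ V₂ k}
    (h : cS G₁ G₂ k N x = cS G₁ G₂ k N y) (i j : Fin k) :
    adjP G₁ G₂ k x i j ↔ adjP G₁ G₂ k y i j := by
  have h0 : cS G₁ G₂ k 0 x = cS G₁ G₂ k 0 y := cS_down G₁ G₂ k (Nat.zero_le N) h
  rw [adjP, adjP, h0]

/-- Claim C: a stable coloring determines the colors of self-update tuples. -/
theorem cS_updSelf {N : ℕ} (hGood : Good G₁ G₂ k N) {x y : STup V₁ V₂ k}
    {i j : Fin k} (hij : i ≠ j) (h : cS G₁ G₂ k N x = cS G₁ G₂ k N y) :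
    cS G₁ G₂ k N (updSelf k x i j) = cS G₁ G₂ k N (updSelf k y i j) := by
  have h1 : cS G₁ G₂ k (N + 1) x = cS G₁ G₂ k (N + 1) y := hGood x y h
  have h2 : (nbhdS k x i).map (cS G₁ G₂ k N) = (nbhdS k y i).map (cS G₁ G₂ k N) := by
    have := congrArg (fun z => z.2 i) h1
    simpa [cS_snd] using this
  have hrel := mrel_of_map_eq h2
  have hrelf := mrel_filter (p := fun z => eqP G₁ G₂ k z i j) (q := fun z => eqP G₁ G₂ k z i j)
    (fun a b hab => eqP_congr G₁ G₂ k hab i j) hrel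
  rw [nbhdS_filter_eqP G₁ G₂ k hij, nbhdS_filter_eqP G₁ G₂ k hij] at hrelf
  exact mrel_singleton (r := fun a b => cS G₁ G₂ k N a = cS G₁ G₂ k N b) hrelf

theorem eqP_refl (x : STup V₁ V₂ k) (j : Fin k) : eqP G₁ G₂ k x j j := by
  cases x <;> exact rfl

theorem diagAt_eq_self {x : STup V₁ V₂ k} {j : Fin k}
    (h : ∀ i, eqP G₁ G₂ k x i j) : diagAt k x j = x := by
  cases x with
  | inl t => exact congrArg Sum.inl (funext (fun i => (show t i = t j from h i).symm))
  | inr t => exact congrArg Sum.inr (funext (fun i => (show t i = t j from h i).symm))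

omit [Fintype V₁] [Fintype V₂] in
theorem diagAt_updSelf (x : STup V₁ V₂ k) {i j : Fin k} (hij : i ≠ j) :
    diagAt k (updSelf k x i j) j = diagAt k x j := by
  cases x with
  | inl t => exact congrArg Sum.inl (funext (fun _ => Function.update_of_ne (Ne.symm hij) _ _))
  | inr t => exact congrArg Sum.inr (funext (fun _ => Function.update_of_ne (Ne.symm hij) _ _))

theorem eqP_updSelf_iff (x : STup V₁ V₂ k) {i i' j : Fin k} (hij : i ≠ j) (hii' : i' ≠ i) :
    eqP G₁ G₂ k (updSelf k x i j) i' j ↔ eqP G₁ G₂ k x i' j := by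
  cases x with
  | inl t =>
      show (Function.update t i (t j) i' = Function.update t i (t j) j) ↔ _
      rw [Function.update_of_ne hii', Function.update_of_ne (Ne.symm hij)]
      exact Iff.rfl
  | inr t =>
      show (Function.update t i (t j) i' = Function.update t i (t j) j) ↔ _
      rw [Function.update_of_ne hii', Function.update_of_ne (Ne.symm hij)]
      exact Iff.rfl

theorem eqP_updSelf_self (x : STup V₁ V₂ k) {i j : Fin k} (hij : i ≠ j) :
    eqP G₁ G₂ k (updSelf k x i j) i j := by
  cases x with
  | inl t =>
      show Function.update t i (t j) i = Function.update t i (t j) j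
      rw [Function.update_self, Function.update_of_ne (Ne.symm hij)]
  | inr t =>
      show Function.update t i (t j) i = Function.update t i (t j) j
      rw [Function.update_self, Function.update_of_ne (Ne.symm hij)]

open Classical in
/-- The set of coordinates whose entry differs from the `j`-th entry. -/
noncomputable def badSet (x : STup V₁ V₂ k) (j : Fin k) : Finset (Fin k) :=
  Finset.univ.filter (fun i => ¬ eqP G₁ G₂ k x i j)

/-- Claim D: a stable coloring of a tuple determines the colors of the diagonal tuples of
its entries. -/
theorem cS_diagAt {N : ℕ} (hGood : Good G₁ G₂ k N) :
    ∀ n : ℕ, ∀ x y : STup V₁ V₂ k, ∀ j : Fin k,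
      (badSet G₁ G₂ k x j).card ≤ n →
      cS G₁ G₂ k N x = cS G₁ G₂ k N y →
      cS G₁ G₂ k N (diagAt k x j) = cS G₁ G₂ k N (diagAt k y j) := by
  intro n
  induction n with
  | zero =>
      intro x y j hcard h
      have hx : ∀ i, eqP G₁ G₂ k x i j := by
        intro i
        by_contra hi
        have : i ∈ badSet G₁ G₂ k x j := by
          simp [badSet, hi]
        simp [Finset.card_eq_zero.mp (Nat.le_zero.mp hcard)] at this
      have hy : ∀ i, eqP G₁ G₂ k y i j := fun i => (eqP_congr G₁ G₂ k h i j).mp (hx i)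
      rw [diagAt_eq_self G₁ G₂ k hx, diagAt_eq_self G₁ G₂ k hy]
      exact h
  | succ n ih =>
      intro x y j hcard h
      by_cases hempty : (badSet G₁ G₂ k x j).card = 0
      · exact ih x y j (by omega) h
      · obtain ⟨i, hi⟩ := Finset.card_pos.mp (Nat.pos_of_ne_zero hempty)
        have hibad : ¬ eqP G₁ G₂ k x i j := by
          have := Finset.mem_filter.mp hi
          exact this.2
        have hij : i ≠ j := fun hh => hibad (hh ▸ eqP_refl G₁ G₂ k x j)
        have h' := cS_updSelf G₁ G₂ k hGood hij h
        have hsub : badSet G₁ G₂ k (updSelf k x i j) j ⊆ (badSet G₁ G₂ k x j).erase i := by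
          intro i' hi'
          have hmem := Finset.mem_filter.mp hi'
          have hi'i : i' ≠ i := by
            rintro rfl
            exact hmem.2 (eqP_updSelf_self G₁ G₂ k x hij)
          refine Finset.mem_erase.mpr ⟨hi'i, Finset.mem_filter.mpr ⟨Finset.mem_univ _, ?_⟩⟩
          intro hcon
          exact hmem.2 ((eqP_updSelf_iff G₁ G₂ k x hij hi'i).mpr hcon)
        have hcard' : (badSet G₁ G₂ k (updSelf k x i j) j).card ≤ n := by
          have h1 := Finset.card_le_card hsub
          have h2 := Finset.card_erase_of_mem hi
          omega
        have := ih (updSelf k x i j) (updSelf k y i j) j hcard' h'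
        rwa [diagAt_updSelf k x hij, diagAt_updSelf k y hij] at this

/-- Vertices of the disjoint union. -/
abbrev WSum (V₁ V₂ : Type) : Type := V₁ ⊕ V₂

/-- The diagonal tuple of a vertex. -/
def diagW (k : ℕ) : WSum V₁ V₂ → STup V₁ V₂ k
  | Sum.inl v => Sum.inl (fun _ => v)
  | Sum.inr v => Sum.inr (fun _ => v)

/-- The diagonal color of a vertex. -/
def dC (N : ℕ) (w : WSum V₁ V₂) : KWLType k N := cS G₁ G₂ k N (diagW k w)

open Classical in
/-- The neighbors of a vertex in the disjoint union. -/
noncomputable def nbrsW : WSum V₁ V₂ → Multiset (WSum V₁ V₂)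
  | Sum.inl v => (Finset.univ.val.filter (fun x => G₁.Adj v x)).map Sum.inl
  | Sum.inr v => (Finset.univ.val.filter (fun x => G₂.Adj v x)).map Sum.inr

theorem side_compute {N : ℕ} {i0 i1 : Fin k} (h01 : i0 ≠ i1) (v : WSum V₁ V₂) :
    ((nbhdS k (diagW k v) i1).filter (fun z => adjP G₁ G₂ k z i0 i1)).map
      (fun a => cS G₁ G₂ k N (diagAt k a i1)) = (nbrsW G₁ G₂ v).map (dC G₁ G₂ k N) := by
  cases v with
  | inl v₀ =>
      show (Multiset.filter _ (Finset.univ.val.map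
        (fun u => (Sum.inl (Function.update (fun _ => v₀) i1 u) : STup V₁ V₂ k)))).map _ = _
      rw [Multiset.filter_map, Multiset.map_map]
      rw [Multiset.filter_congr (fun u (_ : u ∈ Finset.univ.val) => by
        show G₁.Adj (Function.update (fun _ => v₀) i1 u i0)
          (Function.update (fun _ => v₀) i1 u i1) ↔ G₁.Adj v₀ u
        rw [Function.update_of_ne h01, Function.update_self])]
      show _ = ((Finset.univ.val.filter (fun x => G₁.Adj v₀ x)).map Sum.inl).map (dC G₁ G₂ k N)
      rw [Multiset.map_map]
      refine Multiset.map_congr rfl (fun u hu => ?_)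
      have h3 : Function.update (fun _ => v₀) i1 u i1 = u := Function.update_self _ _ _
      show cS G₁ G₂ k N (Sum.inl (fun _ => Function.update (fun _ => v₀) i1 u i1)) =
        cS G₁ G₂ k N (Sum.inl (fun _ => u))
      simp only [h3]
  | inr v₀ =>
      show (Multiset.filter _ (Finset.univ.val.map
        (fun u => (Sum.inr (Function.update (fun _ => v₀) i1 u) : STup V₁ V₂ k)))).map _ = _
      rw [Multiset.filter_map, Multiset.map_map]
      rw [Multiset.filter_congr (fun u (_ : u ∈ Finset.univ.val) => by
        show G₂.Adj (Function.update (fun _ => v₀) i1 u i0)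
          (Function.update (fun _ => v₀) i1 u i1) ↔ G₂.Adj v₀ u
        rw [Function.update_of_ne h01, Function.update_self])]
      show _ = ((Finset.univ.val.filter (fun x => G₂.Adj v₀ x)).map Sum.inr).map (dC G₁ G₂ k N)
      rw [Multiset.map_map]
      refine Multiset.map_congr rfl (fun u hu => ?_)
      have h3 : Function.update (fun _ => v₀) i1 u i1 = u := Function.update_self _ _ _
      show cS G₁ G₂ k N (Sum.inr (fun _ => Function.update (fun _ => v₀) i1 u i1)) =
        cS G₁ G₂ k N (Sum.inr (fun _ => u))
      simp only [h3]

/-- Claim B: equal diagonal colors give equal multisets of диagonal colors of neighbors. -/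
theorem nbrsW_map_dC {N : ℕ} (hGood : Good G₁ G₂ k N) (hk : 2 ≤ k)
    {v w : WSum V₁ V₂} (h : dC G₁ G₂ k N v = dC G₁ G₂ k N w) :
    (nbrsW G₁ G₂ v).map (dC G₁ G₂ k N) = (nbrsW G₁ G₂ w).map (dC G₁ G₂ k N) := by
  have h0 : (0 : ℕ) < k := by omega
  have h1' : (1 : ℕ) < k := by omega
  set i0 : Fin k := ⟨0, h0⟩ with hi0
  set i1 : Fin k := ⟨1, h1'⟩ with hi1
  have h01 : i0 ≠ i1 := by
    intro hc
    have := congrArg Fin.val hc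
    simp [hi0, hi1] at this
  have h1 : cS G₁ G₂ k (N + 1) (diagW k v) = cS G₁ G₂ k (N + 1) (diagW k w) := hGood _ _ h
  have h2 : (nbhdS k (diagW k v) i1).map (cS G₁ G₂ k N) =
      (nbhdS k (diagW k w) i1).map (cS G₁ G₂ k N) := by
    have := congrArg (fun z => z.2 i1) h1
    simpa [cS_snd] using this
  have hrel := mrel_of_map_eq h2
  have hrelf := mrel_filter (p := fun z => adjP G₁ G₂ k z i0 i1)
    (q := fun z => adjP G₁ G₂ k z i0 i1)
    (fun a b hab => adjP_congr G₁ G₂ k hab i0 i1) hrel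
  have hmono := hrelf.mono (fun a _ b _ hab =>
    cS_diagAt G₁ G₂ k hGood ((badSet G₁ G₂ k a i1).card) a b i1 le_rfl hab)
  have hmap := map_eq_of_mrel hmono
  rwa [side_compute G₁ G₂ k h01, side_compute G₁ G₂ k h01] at hmap

/-- The combined 1-WL coloring (initialized with the stable diagonal `k`-WL colors)
of the two graphs. -/
noncomputable def pcol (m : ℕ) : WSum V₁ V₂ → WLType (KWLType k (stableSteps V₁ V₂ k)) m :=
  Sum.elim (wl G₁ (kwlDiag (V₁ := V₁) (V₂ := V₂) G₁ k) m)
    (wl G₂ (kwlDiag (V₁ := V₁) (V₂ := V₂) G₂ k) m)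

theorem pcol_zero (x : WSum V₁ V₂) :
    pcol G₁ G₂ k 0 x = dC G₁ G₂ k (stableSteps V₁ V₂ k) x := by
  cases x <;> rfl

theorem pcol_succ (m : ℕ) (x : WSum V₁ V₂) :
    pcol G₁ G₂ k (m + 1) x = (pcol G₁ G₂ k m x, (nbrsW G₁ G₂ x).map (pcol G₁ G₂ k m)) := by
  cases x <;> simp [pcol, nbrsW, wl, Multiset.map_map] <;> rfl

/-- Claim A: the 1-WL refinement never distinguishes vertices with equal `Δ(k-WL)` color. -/
theorem pcol_congr (hGood : Good G₁ G₂ k (stableSteps V₁ V₂ k)) (hk : 2 ≤ k) :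
    ∀ m : ℕ, ∀ x y : WSum V₁ V₂,
      dC G₁ G₂ k (stableSteps V₁ V₂ k) x = dC G₁ G₂ k (stableSteps V₁ V₂ k) y →
      pcol G₁ G₂ k m x = pcol G₁ G₂ k m y := by
  intro m
  induction m with
  | zero =>
      intro x y h
      rw [pcol_zero, pcol_zero]
      exact h
  | succ m ih =>
      intro x y h
      rw [pcol_succ, pcol_succ]
      refine Prod.ext (ih x y h) ?_
      have hB := nbrsW_map_dC G₁ G₂ k hGood hk h
      exact map_eq_of_mrel ((mrel_of_map_eq hB).mono (fun a _ b _ hab => ih a b hab))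

end KWLAux

end Aux

/-- If `G₁` and `G₂` have equal multisets of diagonal stable `k`-WL
colors, then the vertex-color multisets produced by 1-WL refinement initialized with
`Δ(k-WL)` remain equal after every number of iterations: the 1-WL message passing adds
no distinguishing information beyond the initial coloring `Δ(k-WL)`. -/
theorem wl_on_kwlDiag_adds_nothing
    {V₁ V₂ : Type} [Fintype V₁] [Fintype V₂]
    (G₁ : SimpleGraph V₁) (G₂ : SimpleGraph V₂) (k : ℕ) (hk : 2 ≤ k)
    (hdiag : Finset.univ.val.map (kwlDiag (V₁ := V₁) (V₂ := V₂) G₁ k) =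
      Finset.univ.val.map (kwlDiag (V₁ := V₁) (V₂ := V₂) G₂ k)) :
    ∀ m : ℕ, wlColors G₁ (kwlDiag (V₁ := V₁) (V₂ := V₂) G₁ k) m =
      wlColors G₂ (kwlDiag (V₁ := V₁) (V₂ := V₂) G₂ k) m := by
  intro m
  have hGood : KWLAux.Good G₁ G₂ k (stableSteps V₁ V₂ k) := KWLAux.good_card G₁ G₂ k
  have hd : Finset.univ.val.map
        (fun v : V₁ => KWLAux.dC G₁ G₂ k (stableSteps V₁ V₂ k) (Sum.inl v)) =
      Finset.univ.val.map
        (fun v : V₂ => KWLAux.dC G₁ G₂ k (stableSteps V₁ V₂ k) (Sum.inr v)) := hdiag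
  have hrel := KWLAux.mrel_of_map_eq hd
  have hrel2 := hrel.mono (fun a _ b _ hab =>
    KWLAux.pcol_congr G₁ G₂ k hGood hk m (Sum.inl a) (Sum.inr b) hab)
  exact KWLAux.map_eq_of_mrel hrel2
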